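/- For every S ∈ ℕ with S ≥ 1 and every tree T there is an S-cut C of T with |C| ≤ |V(T)|/S. -/

import Mathlib

open SimpleGraph

/-- Vertex set of the complete tripartite graph `K_{n,n,n}`. -/
abbrev TriV (n : ℕ) := (Σ _ : Fin 3, Fin n)

/-- The complete tripartite graph `K_{n,n,n}`. -/
def triK (n : ℕ) : SimpleGraph (TriV n) := completeMultipartiteGraph (fun _ : Fin 3 => Fin n)

/-- The spanning subgraph of a coloured graph formed by the edges of colour `c`. -/
def colSub {V : Type} (G : SimpleGraph V) (col : Sym2 V → Bool) (c : Bool) : SimpleGraph V where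
  Adj u v := G.Adj u v ∧ col s(u, v) = c
  symm := ⟨by
    intro u v h
    refine ⟨h.1.symm, ?_⟩
    rw [Sym2.eq_swap]
    exact h.2⟩
  loopless := ⟨fun v h => G.loopless.irrefl v h.1⟩

/-- The class `𝒦ηₙ` of spanning subgraphs of `K_{n,n,n}` with minimum degree `> (2-η)n`. -/
def KK (n : ℕ) (η : ℝ) (K : SimpleGraph (TriV n)) : Prop :=
  K ≤ triK n ∧ ∀ v : TriV n, (2 - η) * n < (({u | K.Adj v u} : Set (TriV n)).ncard : ℝ)

/-- `M` is a matching in the graph `G`: a set of pairwise vertex-disjoint edges of `G`. -/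
def IsMatching' {V : Type} (G : SimpleGraph V) (M : Finset (Sym2 V)) : Prop :=
  (∀ e ∈ M, e ∈ G.edgeSet) ∧
    ∀ e ∈ M, ∀ f ∈ M, e ≠ f → ∀ v : V, v ∈ e → v ∉ f

/-- `v` is covered by the matching `M`. -/
def MCovers {V : Type} (M : Finset (Sym2 V)) (v : V) : Prop := ∃ e ∈ M, v ∈ e

/-- The matching `M` is connected in `G`: all covered vertices lie in one component of `G`. -/
def MatchConnected {V : Type} (G : SimpleGraph V) (M : Finset (Sym2 V)) : Prop :=
  ∀ u v : V, MCovers M u → MCovers M v → G.Reachable u v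

/-- The matching `M` is odd: the component of `G` containing it has an odd cycle. -/
def MatchOdd {V : Type} (G : SimpleGraph V) (M : Finset (Sym2 V)) : Prop :=
  ∃ (u : V) (p : G.Walk u u), p.IsCycle ∧ Odd p.length ∧
    ∃ v : V, MCovers M v ∧ G.Reachable u v

/-- A coloured graph is `m`-odd if some colour contains an odd connected matching of
size at least `m`. -/
def mOdd (n : ℕ) (K : SimpleGraph (TriV n)) (col : Sym2 (TriV n) → Bool) (m : ℝ) : Prop :=
  ∃ (c : Bool) (M : Finset (Sym2 (TriV n))),
    IsMatching' (colSub K col c) M ∧ MatchConnected (colSub K col c) M ∧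
      MatchOdd (colSub K col c) M ∧ m ≤ (M.card : ℝ)

/-- A fork system of ratio at most `r` in `G`: each element is a fork given by its center
and its (nonempty) set of at most `r` prongs; the forks are pairwise vertex-disjoint. -/
def IsForkSystem {V : Type} (G : SimpleGraph V) (r : ℕ) (F : Finset (V × Finset V)) : Prop :=
  (∀ p ∈ F, p.2.Nonempty ∧ p.1 ∉ p.2 ∧ p.2.card ≤ r ∧ ∀ v ∈ p.2, G.Adj p.1 v) ∧
    ∀ p ∈ F, ∀ q ∈ F, p ≠ q → ∀ v : V, (v = p.1 ∨ v ∈ p.2) → ¬(v = q.1 ∨ v ∈ q.2)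

/-- `v` is covered by the fork system `F`. -/
def FCovers {V : Type} (F : Finset (V × Finset V)) (v : V) : Prop :=
  ∃ p ∈ F, v = p.1 ∨ v ∈ p.2

/-- The fork system `F` is connected in `G`. -/
def ForkConnected {V : Type} (G : SimpleGraph V) (F : Finset (V × Finset V)) : Prop :=
  ∀ u v : V, FCovers F u → FCovers F v → G.Reachable u v

/-- The size of a fork system: the total number of prongs. -/
def forkSize {V : Type} (F : Finset (V × Finset V)) : ℕ := ∑ p ∈ F, p.2.card

/-- A coloured graph is `(m,f,r)`-good if some colour contains a connected matching of size
at least `m` and a connected fork system of ratio at most `r` and size at least `f`. -/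
def Good (n : ℕ) (K : SimpleGraph (TriV n)) (col : Sym2 (TriV n) → Bool)
    (m f : ℝ) (r : ℕ) : Prop :=
  ∃ c : Bool,
    (∃ M, IsMatching' (colSub K col c) M ∧ MatchConnected (colSub K col c) M ∧
      m ≤ (M.card : ℝ)) ∧
    (∃ F, IsForkSystem (colSub K col c) r F ∧ ForkConnected (colSub K col c) F ∧
      f ≤ (forkSize F : ℝ))

/-- `K[D,D']` is `η`-complete w.r.t. `n`: every vertex of either side has at most `ηn`
non-neighbours on the other side. -/
def EtaComplete {V : Type} (K : SimpleGraph V) (n : ℕ) (η : ℝ) (D D' : Finset V) : Prop :=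
  (∀ v ∈ D, (({u | u ∈ D' ∧ ¬K.Adj v u} : Set V).ncard : ℝ) ≤ η * n) ∧
  (∀ v ∈ D', (({u | u ∈ D ∧ ¬K.Adj u v} : Set V).ncard : ℝ) ≤ η * n)

/-- `K[D,D']` is `(η,c)`-complete: `η`-complete and all its edges have colour `c`. -/
def EtaCComplete {V : Type} (K : SimpleGraph V) (col : Sym2 V → Bool) (n : ℕ) (η : ℝ)
    (c : Bool) (D D' : Finset V) : Prop :=
  EtaComplete K n η D D' ∧ ∀ u ∈ D, ∀ v ∈ D', K.Adj u v → col s(u, v) = c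

/-- Pyramid configuration with parameter `η` (Definition (E1)). -/
def PyramidConfig (n : ℕ) (K : SimpleGraph (TriV n)) (col : Sym2 (TriV n) → Bool)
    (η : ℝ) : Prop :=
  ∃ (c c' : Bool) (D1 D2 D1' D2' : Finset (TriV n)),
    Disjoint D1 D2 ∧ Disjoint D1 D1' ∧ Disjoint D1 D2' ∧ Disjoint D2 D1' ∧
      Disjoint D2 D2' ∧ Disjoint D1' D2' ∧
    D1.card ≤ n ∧ D2.card ≤ n ∧ D1'.card ≤ n ∧ D2'.card ≤ n ∧
    (1 - η) * n ≤ (D1.card : ℝ) ∧ (1 - η) * n ≤ (D2.card : ℝ) ∧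
    (1 - η) * n ≤ (D1'.card : ℝ) + (D2'.card : ℝ) ∧
    (D1' = ∅ ∨ 2 * η * n ≤ (D1'.card : ℝ)) ∧
    (D2' = ∅ ∨ 2 * η * n ≤ (D2'.card : ℝ)) ∧
    EtaCComplete K col n η c D1 D1' ∧ EtaCComplete K col n η c D2 D2' ∧
    EtaComplete K n η D1 D2' ∧ EtaComplete K n η D2 D1' ∧ EtaComplete K n η D1 D2 ∧
    (EtaCComplete K col n η c' D1 D2 ∨
      (EtaCComplete K col n η c' D1 D2' ∧ EtaCComplete K col n η c' D1' D2))

/-- Crossing relation of the six bipartite graphs in the spider configuration. -/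
def spiderCross {V : Type} (A1 A2 B1 B2 C1 C2 : Finset V) (u v : V) : Prop :=
  (u ∈ A1 ∧ (v ∈ B2 ∨ v ∈ C2)) ∨ (u ∈ B1 ∧ (v ∈ A2 ∨ v ∈ C2)) ∨
    (u ∈ C1 ∧ (v ∈ A2 ∨ v ∈ B2))

/-- The union of the six bipartite graphs in the spider configuration, as a graph. -/
def spiderGraph {V : Type} (K : SimpleGraph V) (A1 A2 B1 B2 C1 C2 : Finset V) :
    SimpleGraph V where
  Adj u v := K.Adj u v ∧
    (spiderCross A1 A2 B1 B2 C1 C2 u v ∨ spiderCross A1 A2 B1 B2 C1 C2 v u)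
  symm := ⟨by
    intro u v h
    exact ⟨h.1.symm, h.2.symm⟩⟩
  loopless := ⟨fun v h => K.loopless.irrefl v h.1⟩

/-- Spider configuration with parameter `η` (Definition (E2)). -/
def SpiderConfig (n : ℕ) (K : SimpleGraph (TriV n)) (col : Sym2 (TriV n) → Bool)
    (η : ℝ) : Prop :=
  ∃ (c : Bool) (A1 A2 B1 B2 C1 C2 : Finset (TriV n)),
    List.Pairwise Disjoint [A1, A2, B1, B2, C1, C2] ∧
    (1 - η) * n ≤ ((A1 ∪ A2).card : ℝ) ∧ (1 - η) * n ≤ ((B1 ∪ B2).card : ℝ) ∧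
      (1 - η) * n ≤ ((C1 ∪ C2).card : ℝ) ∧
    EtaCComplete K col n η c A1 B2 ∧ EtaCComplete K col n η c A1 C2 ∧
    EtaCComplete K col n η c B1 A2 ∧ EtaCComplete K col n η c B1 C2 ∧
    EtaCComplete K col n η c C1 A2 ∧ EtaCComplete K col n η c C1 B2 ∧
    (∀ u ∈ A1 ∪ B1 ∪ C1 ∪ A2 ∪ B2 ∪ C2, ∀ v ∈ A1 ∪ B1 ∪ C1 ∪ A2 ∪ B2 ∪ C2,
      (spiderGraph K A1 A2 B1 B2 C1 C2).Reachable u v) ∧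
    ∃ AB AC BA BC CA CB CC : Finset (TriV n),
      A2 = AB ∪ AC ∧ Disjoint AB AC ∧
      B2 = BA ∪ BC ∧ Disjoint BA BC ∧
      C2 = CA ∪ CB ∪ CC ∧ Disjoint CA CB ∧ Disjoint CA CC ∧ Disjoint CB CC ∧
      (AB = ∅ ∨ 2 * η * n ≤ (AB.card : ℝ)) ∧ (AC = ∅ ∨ 2 * η * n ≤ (AC.card : ℝ)) ∧
      (BA = ∅ ∨ 2 * η * n ≤ (BA.card : ℝ)) ∧ (BC = ∅ ∨ 2 * η * n ≤ (BC.card : ℝ)) ∧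
      (CA = ∅ ∨ 2 * η * n ≤ (CA.card : ℝ)) ∧ (CB = ∅ ∨ 2 * η * n ≤ (CB.card : ℝ)) ∧
      (CC = ∅ ∨ 2 * η * n ≤ (CC.card : ℝ)) ∧
      B1.card ≤ A1.card ∧ (C1 ∪ CC).card ≤ B1.card ∧
      AB.card = BA.card ∧ (AB.card : ℝ) ≤ n - (C2.card : ℝ) ∧
      AC.card = CA.card ∧ (AC.card : ℝ) ≤ n - (B2.card : ℝ) ∧
      BC.card = CB.card ∧ (BC.card : ℝ) ≤ n - (A2.card : ℝ) ∧
      (CC = ∅ ∨ AB = ∅) ∧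
      (A2 = ∅ ∨ ((A2 ∪ B2 ∪ CA ∪ CB).card : ℝ) ≤ (1 - η) * (3 / 2) * n) ∧
      (C1 = ∅ ∨ ((A1 ∪ B1 ∪ C1).card : ℝ) < (1 - η) * (3 / 2) * n ∨
        ((B1 ∪ C1).card : ℝ) ≤ (1 - η) * (3 / 4) * n)

/-- A coloured graph is `η`-extremal if it is in pyramid or spider configuration. -/
def Extremal (n : ℕ) (K : SimpleGraph (TriV n)) (col : Sym2 (TriV n) → Bool)
    (η : ℝ) : Prop :=
  PyramidConfig n K col η ∨ SpiderConfig n K col η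

/-- The density of the pair of vertex sets `(U,W)` in `G`. -/
noncomputable def density {V : Type} (G : SimpleGraph V) (U W : Finset V) : ℝ :=
  (({p : V × V | p.1 ∈ U ∧ p.2 ∈ W ∧ G.Adj p.1 p.2} : Set (V × V)).ncard : ℝ) /
    ((U.card : ℝ) * (W.card : ℝ))

/-- `(U,W)` is an `(ε,d)`-regular pair in `G`. -/
def IsRegularPair {V : Type} (G : SimpleGraph V) (ε d : ℝ) (U W : Finset V) : Prop :=
  d ≤ density G U W ∧
    ∀ U' ⊆ U, ∀ W' ⊆ W, ε * U.card ≤ (U'.card : ℝ) → ε * W.card ≤ (W'.card : ℝ) →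
      |density G U' W' - density G U W| ≤ ε

/-- `𝔾` is an `(ε,d)`-reduced graph of `G` with partition `V₀ ∪ V₁ ∪ ... ∪ V_k`
given by the bin set `V0` and the clusters `P i`. -/
def IsReducedGraph {V : Type} [Fintype V] (G : SimpleGraph V) (ε d : ℝ) (k : ℕ)
    (GG : SimpleGraph (Fin k)) (V0 : Finset V) (P : Fin k → Finset V) : Prop :=
  (∀ i, Disjoint V0 (P i)) ∧ (∀ i j, i ≠ j → Disjoint (P i) (P j)) ∧
    (∀ v : V, v ∈ V0 ∨ ∃ i, v ∈ P i) ∧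
    ((V0.card : ℝ) ≤ ε * Fintype.card V) ∧
    (∀ i j, (P i).card = (P j).card) ∧
    (∀ i j, GG.Adj i j → IsRegularPair G ε d (P i) (P j))

/-- The graph obtained from `G` by deleting the vertices in `C` (the deleted vertices
remain as isolated vertices). -/
def delVerts {V : Type} (G : SimpleGraph V) (C : Finset V) : SimpleGraph V where
  Adj u v := G.Adj u v ∧ u ∉ C ∧ v ∉ C
  symm := ⟨by
    intro u v h
    exact ⟨h.1.symm, h.2.2, h.2.1⟩⟩
  loopless := ⟨fun v h => G.loopless.irrefl v h.1⟩

/-- `C` is an `S`-cut of `T`: every component of `T - C` has at most `S` vertices. -/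
def IsCut {V : Type} (T : SimpleGraph V) (S : ℝ) (C : Finset V) : Prop :=
  ∀ v : V, v ∉ C →
    ((({u | (delVerts T C).Reachable u v} : Set V).ncard : ℝ)) ≤ S

/-- `h` is a `(ρ,L)`-valid assignment of `T` to `GG`. -/
def ValidAssignment {V W : Type} (T : SimpleGraph V) (GG : SimpleGraph W)
    (ρ L : ℝ) (h : V → W) : Prop :=
  (∀ u v : V, T.Adj u v → GG.Adj (h u) (h v)) ∧
  (∀ x : V, ({i | ∃ y : V, T.Adj x y ∧ h y = i} : Set W).ncard ≤ 2) ∧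
  (∀ i : W, (({x : V | h x = i} : Set V).ncard : ℝ) < (1 - ρ) * L)

/-- The bipartite graph `K[D,D']` formed by the edges of `K` between `D` and `D'`. -/
def bipBetween {V : Type} (K : SimpleGraph V) (D D' : Finset V) : SimpleGraph V where
  Adj u v := K.Adj u v ∧ ((u ∈ D ∧ v ∈ D') ∨ (u ∈ D' ∧ v ∈ D))
  symm := ⟨by
    intro u v h
    refine ⟨h.1.symm, ?_⟩
    rcases h.2 with ⟨hu, hv⟩ | ⟨hu, hv⟩
    · exact Or.inr ⟨hv, hu⟩
    · exact Or.inl ⟨hv, hu⟩⟩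
  loopless := ⟨fun v h => K.loopless.irrefl v h.1⟩

section helpers
variable {V : Type} [DecidableEq V] {T : SimpleGraph V}

lemma delVerts_le (X : Finset V) : delVerts T X ≤ T := fun _ _ h => h.1

lemma delVerts_anti {X Y : Finset V} (h : X ⊆ Y) : delVerts T Y ≤ delVerts T X :=
  fun _ _ hadj => ⟨hadj.1, fun hx => hadj.2.1 (h hx), fun hx => hadj.2.2 (h hx)⟩

lemma support_notMem {X : Finset V} {a b : V} (p : (delVerts T X).Walk a b) :
    ∀ y ∈ p.support, y = a ∨ y ∉ X := by
  induction p with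
  | nil => intro y hy; left; simpa using hy
  | cons h q ih =>
    intro y hy
    rw [SimpleGraph.Walk.support_cons, List.mem_cons] at hy
    rcases hy with rfl | hy
    · right; exact h.2.1
    · rcases ih y hy with rfl | hy'
      · right; exact h.2.2
      · right; exact hy'

lemma reach_right_notMem {X : Finset V} {a b : V} (h : (delVerts T X).Reachable a b) :
    b = a ∨ b ∉ X := by
  obtain ⟨p⟩ := h
  exact support_notMem p b p.end_mem_support

lemma reach_left_notMem {X : Finset V} {a b : V} (h : (delVerts T X).Reachable a b) :
    a = b ∨ a ∉ X :=
  reach_right_notMem h.symm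

lemma walk_transfer {X Y : Finset V} {a b : V} (p : (delVerts T X).Walk a b)
    (hp : ∀ y ∈ p.support, y ∉ Y) :
    ∃ q : (delVerts T (X ∪ Y)).Walk a b, q.support = p.support := by
  induction p with
  | nil => exact ⟨SimpleGraph.Walk.nil, rfl⟩
  | cons h q ih =>
    obtain ⟨q', hq'⟩ := ih (fun y hy => hp y (by simp [SimpleGraph.Walk.support_cons, hy]))
    refine ⟨SimpleGraph.Walk.cons ⟨h.1, ?_, ?_⟩ q',
      (SimpleGraph.Walk.support_cons _ _).trans ((congrArg (List.cons _) hq').trans (SimpleGraph.Walk.support_cons _ _).symm)⟩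
    · simp only [Finset.mem_union]
      rintro (hx | hy)
      · exact h.2.1 hx
      · exact hp _ (SimpleGraph.Walk.start_mem_support _) hy
    · simp only [Finset.mem_union]
      rintro (hx | hy)
      · exact h.2.2 hx
      · exact hp _ (by simp [SimpleGraph.Walk.support_cons, q.start_mem_support]) hy

lemma mapLe_support {G G' : SimpleGraph V} (h : G ≤ G') {a b : V} (p : G.Walk a b) :
    (p.mapLe h).support = p.support := by
  exact SimpleGraph.Walk.support_mapLe_eq_support h p

lemma acyclic_delVerts (hT : T.IsAcyclic) (X : Finset V) : (delVerts T X).IsAcyclic := by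
  intro v c hc
  exact hT _ (hc.mapLe (delVerts_le X))

end helpers

section sep
variable {V : Type} [DecidableEq V] {T : SimpleGraph V}

/-- Transfer a reachability witness avoiding one extra vertex. -/
lemma reach_del_insert {X : Finset V} {a b x : V} (p : (delVerts T X).Walk a b)
    (hx : x ∉ p.support) : (delVerts T (insert x X)).Reachable a b := by
  obtain ⟨q, -⟩ := walk_transfer p (Y := {x}) (fun y hy => by
    simp only [Finset.mem_singleton]; rintro rfl; exact hx hy)
  exact (Reachable.mono (delVerts_anti (by rw [Finset.insert_eq, Finset.union_comm]))) ⟨q⟩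

/-- In any graph, two vertices cannot mutually separate each other from `r`. -/
lemma no_mutual_sep {X : Finset V} {v w r : V}
    (h1 : ¬ (delVerts T (insert v X)).Reachable w r)
    (h2 : ¬ (delVerts T (insert w X)).Reachable v r)
    (hvr : (delVerts T X).Reachable v r) (hvw : v ≠ w) : False := by
  obtain ⟨p⟩ := hvr
  have main : ∀ n : ℕ, ∀ p : (delVerts T X).Walk v r, p.length ≤ n → False := by
    intro n
    induction n with
    | zero =>
      intro p hp
      have : v = r := p.eq_of_length_eq_zero (Nat.le_zero.mp hp)
      exact h2 (this ▸ Reachable.refl v)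
    | succ n ih =>
      intro p hp
      have hw : w ∈ p.support := by
        by_contra hw
        exact h2 (reach_del_insert p hw)
      have hspec := p.take_spec hw
      have hlen : (p.takeUntil w hw).length + (p.dropUntil w hw).length = p.length := by
        conv_rhs => rw [← hspec]
        rw [SimpleGraph.Walk.length_append]
      have hpos : 1 ≤ (p.takeUntil w hw).length := by
        by_contra h
        exact hvw ((p.takeUntil w hw).eq_of_length_eq_zero (by omega))
      set q := p.dropUntil w hw with hq
      have hv : v ∈ q.support := by
        by_contra hv
        exact h1 (reach_del_insert q hv)
      have hq2 := q.take_spec hv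
      have hlen2 : (q.takeUntil v hv).length + (q.dropUntil v hv).length = q.length := by
        conv_rhs => rw [← hq2]
        rw [SimpleGraph.Walk.length_append]
      exact ih (q.dropUntil v hv) (by omega)
  exact main p.length p le_rfl

end sep
set_option maxHeartbeats 1000000 in
lemma key_cut {V : Type} [Fintype V] [DecidableEq V] {T : SimpleGraph V} (hT : T.IsAcyclic)
    (S : ℕ) (hS : 1 ≤ S) :
    ∀ (n : ℕ) (A : Finset V), A.card ≤ n → ∃ C : Finset V, C ⊆ A ∧ (S + 1) * C.card ≤ A.card ∧
      ∀ x ∈ A, x ∉ C →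
        ({u | (delVerts T (C ∪ (Finset.univ \ A))).Reachable u x}).ncard ≤ S := by
  classical
  intro n
  induction n with
  | zero =>
    intro A hA
    refine ⟨∅, by simp, by simp, fun x hx _ => ?_⟩
    rw [Finset.card_eq_zero.mp (Nat.le_zero.mp hA)] at hx
    simp at hx
  | succ n ih =>
    intro A hA
    set X := Finset.univ \ A with hX
    by_cases hbig : ∀ x ∈ A, ({u | (delVerts T X).Reachable u x}).ncard ≤ S
    · refine ⟨∅, by simp, by simp, fun x hx _ => ?_⟩
      simpa only [Finset.empty_union] using hbig x hx
    · push_neg at hbig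
      obtain ⟨r, hrA, hrbig⟩ := hbig
      set H := delVerts T X with hH
      set K : Finset V := Finset.univ.filter (fun u => H.Reachable u r) with hK
      have hmemK : ∀ u, u ∈ K ↔ H.Reachable u r := fun u => by simp [hK]
      have hKcard : S + 1 ≤ K.card := by
        have h1 : {u | H.Reachable u r} = ↑K := by ext u; simp [hmemK u]
        rw [h1, Set.ncard_coe_finset] at hrbig
        omega
      have hKA : ∀ u ∈ K, u ∈ A := by
        intro u hu
        rcases reach_left_notMem ((hmemK u).mp hu) with rfl | hnx
        · exact hrA
        · by_contra hc
          exact hnx (by simp [hX, hc])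
      set Ud : V → Finset V := fun w =>
        K.filter (fun u => u ≠ w ∧ ¬ (delVerts T (insert w X)).Reachable u r) with hUd
      have hmemUd : ∀ w u, u ∈ Ud w ↔
          (u ∈ K ∧ u ≠ w ∧ ¬ (delVerts T (insert w X)).Reachable u r) := by
        intro w u; simp [hUd, Finset.mem_filter]
      have hUdr : S ≤ (Ud r).card := by
        have hsub : K.erase r ⊆ Ud r := by
          intro u hu
          rw [Finset.mem_erase] at hu
          refine (hmemUd r u).mpr ⟨hu.2, hu.1, fun hre => ?_⟩
          rcases reach_right_notMem hre with h | h
          · exact hu.1 h.symm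
          · exact h (Finset.mem_insert_self r X)
        have := Finset.card_le_card hsub
        rw [Finset.card_erase_of_mem ((hmemK r).mpr (Reachable.refl r))] at this
        omega
      have hrcand : r ∈ K.filter (fun w => S ≤ (Ud w).card) :=
        Finset.mem_filter.mpr ⟨(hmemK r).mpr (Reachable.refl r), hUdr⟩
      obtain ⟨v, hvcand, hvmin⟩ := Finset.exists_min_image (K.filter (fun w => S ≤ (Ud w).card))
        (fun w => (Ud w).card) ⟨r, hrcand⟩
      have hvK : v ∈ K := (Finset.mem_filter.mp hvcand).1
      have hUS : S ≤ (Ud v).card := (Finset.mem_filter.mp hvcand).2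
      have hvU : v ∉ Ud v := fun h => (((hmemUd v v).mp h).2.1 rfl)
      have hvA : v ∈ A := hKA v hvK
      -- components of `H - v` starting in `Ud v` stay in `Ud v`
      have hclosed : ∀ d ∈ Ud v, ∀ u, (delVerts T (insert v X)).Reachable u d → u ∈ Ud v := by
        intro d hd u hre
        obtain ⟨hdK, hdv, hdnr⟩ := (hmemUd v d).mp hd
        refine (hmemUd v u).mpr ⟨?_, ?_, ?_⟩
        · exact (hmemK u).mpr
            (((Reachable.mono (delVerts_anti (Finset.subset_insert v X))) hre).trans
              ((hmemK d).mp hdK))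
        · intro huv
          rcases reach_left_notMem hre with h' | h'
          · exact hdv (h'.symm.trans huv)
          · exact h' (by rw [huv]; exact Finset.mem_insert_self v X)
        · intro hur
          exact hdnr (hre.symm.trans hur)
      -- every component of `H - v` meeting `Ud v` has at most `S` vertices
      have hcomp : ∀ x ∈ Ud v, ({u | (delVerts T (insert v X)).Reachable u x}).ncard ≤ S := by
        intro x hxU
        by_contra hbigD
        push_neg at hbigD
        set D : Finset V := Finset.univ.filter
          (fun u => (delVerts T (insert v X)).Reachable u x) with hD
        have hmemD : ∀ u, u ∈ D ↔ (delVerts T (insert v X)).Reachable u x := fun u => by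
          simp [hD]
        have hDcard : S + 1 ≤ D.card := by
          have h1 : {u | (delVerts T (insert v X)).Reachable u x} = ↑D := by
            ext u; simp [hmemD u]
          rw [h1, Set.ncard_coe_finset] at hbigD
          omega
        have hDU : ∀ u ∈ D, u ∈ Ud v := fun u hu => hclosed x hxU u ((hmemD u).mp hu)
        obtain ⟨hxK, hxv, hxnr⟩ := (hmemUd v x).mp hxU
        -- find a neighbour `w` of `v` inside `D`
        obtain ⟨p⟩ := (hmemK x).mp hxK
        have hvp : v ∈ p.support := by
          by_contra hvp
          exact hxnr (reach_del_insert p hvp)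
        have hcount : (p.takeUntil v hvp).support.count v = 1 :=
          p.count_support_takeUntil_eq_one hvp
        have htlen : (p.takeUntil v hvp).length ≠ 0 := fun h => hxv ((p.takeUntil v hvp).eq_of_length_eq_zero h)
        have hnil : ¬ (p.takeUntil v hvp).reverse.Nil := by
          rw [SimpleGraph.Walk.nil_iff_length_eq, SimpleGraph.Walk.length_reverse]
          exact htlen
        obtain ⟨w, hadj, q, hqe⟩ := SimpleGraph.Walk.not_nil_iff.mp hnil
        have hvq : v ∉ q.support := by
          have h1 : (p.takeUntil v hvp).reverse.support.count v = 1 := by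
            rw [SimpleGraph.Walk.support_reverse, List.count_reverse]
            exact hcount
          rw [hqe, SimpleGraph.Walk.support_cons] at h1
          rw [List.count_cons_self] at h1
          exact List.count_eq_zero.mp (by omega)
        have hreach_wx : (delVerts T (insert v X)).Reachable w x := reach_del_insert q hvq
        have hwD : w ∈ D := (hmemD w).mpr hreach_wx
        have hwU : w ∈ Ud v := hDU w hwD
        have hvw : v ≠ w := hadj.ne
        obtain ⟨hwK, hwv, hwnr⟩ := (hmemUd v w).mp hwU
        -- `v` is not separated from `r` by `w`
        have hvwr : (delVerts T (insert w X)).Reachable v r := by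
          by_contra h2
          exact no_mutual_sep hwnr h2 ((hmemK v).mp hvK) hvw
        -- every vertex of `D` other than `w` is separated from `r` by `w`
        have hDsub : ∀ u ∈ D, u ≠ w → u ∈ Ud w := by
          intro u hu hune
          obtain ⟨huK, huv, hunr⟩ := (hmemUd v u).mp (hDU u hu)
          have hux : (delVerts T (insert v X)).Reachable u x := (hmemD u).mp hu
          refine (hmemUd w u).mpr ⟨huK, hune, fun hre => ?_⟩
          obtain ⟨p2⟩ := hre
          have hvp2 : v ∈ p2.support := by
            by_contra hvp2
            exact hunr (Reachable.mono
              (delVerts_anti (Finset.insert_subset_insert v (Finset.subset_insert w X)))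
              (reach_del_insert p2 hvp2))
          have hwt2 : w ∉ (p2.takeUntil v hvp2).support := by
            intro hw
            rcases support_notMem (p2.takeUntil v hvp2) w hw with h' | h'
            · exact hune h'.symm
            · exact h' (Finset.mem_insert_self w X)
          -- two distinct paths from `w` to `u` in `H` contradict acyclicity
          set t3 : H.Walk u v :=
            (p2.takeUntil v hvp2).mapLe (delVerts_anti (Finset.subset_insert w X)) with ht3
          have hwt3 : w ∉ t3.support := by
            rw [ht3, mapLe_support]
            exact hwt2
          have hwt3' : w ∉ (t3.toPath : H.Walk u v).reverse.support := by
            intro h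
            rw [SimpleGraph.Walk.support_reverse, List.mem_reverse] at h
            exact hwt3 (SimpleGraph.Walk.support_toPath_subset t3 h)
          have hP2path : (SimpleGraph.Walk.cons hadj.symm
              (t3.toPath : H.Walk u v).reverse).IsPath :=
            SimpleGraph.Walk.IsPath.cons (t3.toPath.2.reverse) hwt3'
          have hvP2 : v ∈ (SimpleGraph.Walk.cons hadj.symm
              (t3.toPath : H.Walk u v).reverse).support := by
            rw [SimpleGraph.Walk.support_cons]
            right
            exact SimpleGraph.Walk.start_mem_support _
          obtain ⟨s⟩ := hreach_wx.trans hux.symm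
          have hvs : v ∉ s.support := by
            intro hv
            rcases support_notMem s v hv with h' | h'
            · exact hvw h'
            · exact h' (Finset.mem_insert_self v X)
          set s1 : H.Walk w u := s.mapLe (delVerts_anti (Finset.subset_insert v X)) with hs1
          have hvP1 : v ∉ (s1.toPath : H.Walk w u).support := by
            intro h
            apply hvs
            have h2 := SimpleGraph.Walk.support_toPath_subset s1 h
            rw [hs1, mapLe_support] at h2
            exact h2
          have huniq := (acyclic_delVerts hT X).path_unique s1.toPath
            ⟨SimpleGraph.Walk.cons hadj.symm (t3.toPath : H.Walk u v).reverse, hP2path⟩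
          rw [huniq] at hvP1
          exact hvP1 hvP2
        -- `Ud w` is strictly smaller than `Ud v`
        have hUws : Ud w ⊆ (Ud v).erase w := by
          intro u hu
          obtain ⟨huK, hunw, hunr⟩ := (hmemUd w u).mp hu
          refine Finset.mem_erase.mpr ⟨hunw, (hmemUd v u).mpr ⟨huK, ?_, ?_⟩⟩
          · rintro rfl
            exact hunr hvwr
          · intro hre
            obtain ⟨p3⟩ := hre
            by_cases hwp3 : w ∈ p3.support
            · exact hwnr ⟨p3.dropUntil w hwp3⟩
            · exact hunr (Reachable.mono
                (delVerts_anti (Finset.insert_subset_insert w (Finset.subset_insert v X)))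
                (reach_del_insert p3 hwp3))
        have hUwS : S ≤ (Ud w).card := by
          have hsub : D.erase w ⊆ Ud w := fun u hu =>
            hDsub u (Finset.mem_of_mem_erase hu) (Finset.ne_of_mem_erase hu)
          have h1 := Finset.card_le_card hsub
          rw [Finset.card_erase_of_mem hwD] at h1
          omega
        have hwcand : w ∈ K.filter (fun w => S ≤ (Ud w).card) :=
          Finset.mem_filter.mpr ⟨hwK, hUwS⟩
        have hlt : (Ud w).card < (Ud v).card := by
          have h1 := Finset.card_le_card hUws
          rw [Finset.card_erase_of_mem hwU] at h1
          have h2 : 1 ≤ (Ud v).card := Finset.card_pos.mpr ⟨w, hwU⟩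
          omega
        exact Nat.lt_irrefl _ (Nat.lt_of_le_of_lt (hvmin w hwcand) hlt)
      -- recurse
      set A' := A \ insert v (Ud v) with hA'
      have hsubA : insert v (Ud v) ⊆ A := by
        intro y hy
        rcases Finset.mem_insert.mp hy with rfl | hy
        · exact hvA
        · exact hKA y (((hmemUd v y).mp hy).1)
      have hcards : A'.card + (insert v (Ud v)).card = A.card :=
        Finset.card_sdiff_add_card_eq_card hsubA
      have hinscard : (insert v (Ud v)).card = (Ud v).card + 1 := Finset.card_insert_of_notMem hvU
      obtain ⟨C', hC'A, hC'card, hC'cut⟩ := ih A' (by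
        have : 1 ≤ A.card := Finset.card_pos.mpr ⟨v, hvA⟩
        omega)
      have hvC' : v ∉ C' := fun h => by
        have := hC'A h
        rw [hA', Finset.mem_sdiff] at this
        exact this.2 (Finset.mem_insert_self _ _)
      refine ⟨insert v C', ?_, ?_, ?_⟩
      · intro y hy
        rcases Finset.mem_insert.mp hy with rfl | hy
        · exact hvA
        · have := hC'A hy
          rw [hA', Finset.mem_sdiff] at this
          exact this.1
      · rw [Finset.card_insert_of_notMem hvC']
        have : A'.card ≤ A.card - (S + 1) := by omega
        nlinarith [hC'card, hUS, hKcard]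
      · intro x hxA hxC
        have hsub1 : insert v X ⊆ insert v C' ∪ X := by
          intro y hy
          rcases Finset.mem_insert.mp hy with rfl | hy
          · exact Finset.mem_union_left _ (Finset.mem_insert_self _ _)
          · exact Finset.mem_union_right _ hy
        by_cases hxU : x ∈ Ud v
        · refine le_trans (Set.ncard_le_ncard ?_ (Set.toFinite _)) (hcomp x hxU)
          intro u hu
          exact Reachable.mono (delVerts_anti hsub1) hu
        · have hxv : x ≠ v := fun h => hxC (h ▸ Finset.mem_insert_self v C')
          have hxA' : x ∈ A' := by
            rw [hA', Finset.mem_sdiff]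
            exact ⟨hxA, fun h => by
              rcases Finset.mem_insert.mp h with rfl | h
              · exact hxv rfl
              · exact hxU h⟩
          have hxC' : x ∉ C' := fun h => hxC (Finset.mem_insert_of_mem h)
          refine le_trans (Set.ncard_le_ncard ?_ (Set.toFinite _)) (hC'cut x hxA' hxC')
          intro u hu
          obtain ⟨p⟩ := hu
          have hUp : ∀ y ∈ p.support, y ∉ Ud v := by
            intro y hy hyU
            have hyx : (delVerts T (insert v C' ∪ X)).Reachable y x := ⟨p.dropUntil y hy⟩
            have hyx' : (delVerts T (insert v X)).Reachable y x :=
              Reachable.mono (delVerts_anti hsub1) hyx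
            exact hxU (hclosed y hyU x hyx'.symm)
          obtain ⟨q, -⟩ := walk_transfer p hUp
          refine Reachable.mono (delVerts_anti ?_) ⟨q⟩
          intro y hy
          rcases Finset.mem_union.mp hy with hy | hy
          · exact Finset.mem_union_left _ (Finset.mem_union_left _ (Finset.mem_insert_of_mem hy))
          · rw [hA', Finset.mem_sdiff, Finset.mem_sdiff] at hy
            by_cases hyA : y ∈ A
            · have : y ∈ insert v (Ud v) := by
                by_contra hc
                exact hy.2 ⟨hyA, hc⟩
              rcases Finset.mem_insert.mp this with h' | hyU
              · exact Finset.mem_union_left _ (Finset.mem_union_left _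
                  (by rw [h']; exact Finset.mem_insert_self _ _))
              · exact Finset.mem_union_right _ hyU
            · exact Finset.mem_union_left _
                (Finset.mem_union_right _ (by rw [hX, Finset.mem_sdiff]; exact ⟨Finset.mem_univ y, hyA⟩))


/-- Lemma 5.1. Every tree `T` has an `S`-cut of size at most `|V(T)|/S`. -/
theorem stmt7 {β : Type} [Fintype β] (T : SimpleGraph β) (hT : T.IsTree)
    (S : ℕ) (hS : 1 ≤ S) :
    ∃ C : Finset β, IsCut T (S : ℝ) C ∧ (C.card : ℝ) ≤ (Fintype.card β : ℝ) / S := by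
  classical
  obtain ⟨C, hCA, hCcard, hCcut⟩ :=
    key_cut hT.IsAcyclic S hS (Fintype.card β) Finset.univ Finset.card_univ.le
  refine ⟨C, ?_, ?_⟩
  · intro x hx
    have h := hCcut x (Finset.mem_univ x) hx
    rw [Finset.sdiff_self, Finset.union_empty] at h
    exact_mod_cast h
  · rw [le_div_iff₀ (by positivity : (0:ℝ) < (S:ℝ))]
    rw [Finset.card_univ] at hCcard
    have h2 : C.card * S ≤ Fintype.card β := by nlinarith
    exact_mod_cast h2
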